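/- arXiv:1805.09849 — 2 statements merged into one kernel-verified Lean document; each statement's English description precedes it below -/
import Mathlib

section
/- If A : X → Y is a compact injective linear operator between Hilbert spaces with singular system {(σ_j, v_j, u_j)}, and g = Σ_{j=1}^∞ β_j u_j ∈ Y satisfies Σ_j (β_j/σ_j)² < ∞, then f = Σ_j (β_j/σ_j) v_j ∈ X satisfies A f = g (Picard's theorem, sufficiency direction). -/
theorem picard_sufficiency {X Y : Type*}
    [NormedAddCommGroup X] [InnerProductSpace ℝ X] [CompleteSpace X]
    [NormedAddCommGroup Y] [InnerProductSpace ℝ Y] [CompleteSpace Y]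
    (A : X →L[ℝ] Y) (hA : IsCompactOperator A) (hinj : Function.Injective A)
    (σ : ℕ → ℝ) (v : ℕ → X) (u : ℕ → Y)
    (hσpos : ∀ j, 0 < σ j) (hσanti : Antitone σ)
    (hσ0 : Filter.Tendsto σ Filter.atTop (nhds 0))
    (hv : Orthonormal ℝ v)
    (hvspan : (Submodule.span ℝ (Set.range v)).topologicalClosure = ⊤)
    (hu : Orthonormal ℝ u)
    (hAv : ∀ j, A (v j) = σ j • u j)
    (hAstaru : ∀ j, ContinuousLinearMap.adjoint A (u j) = σ j • v j)
    (g : Y) (β : ℕ → ℝ) (hβ : ∀ j, β j = inner ℝ g (u j))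
    (hg : g = ∑' j, β j • u j)
    (hPicard : Summable fun j => (β j / σ j) ^ 2) :
    A (∑' j, (β j / σ j) • v j) = g := by
  have hsum : Summable fun j => (β j / σ j) • v j := by
    have := (hv.orthogonalFamily.summable_iff_norm_sq_summable
      (fun j => (β j / σ j : ℝ))).mpr (by simpa [Real.norm_eq_abs, abs_div, div_pow, sq_abs] using hPicard)
    simpa [LinearIsometry.toSpanSingleton_apply] using this
  rw [A.map_tsum hsum]
  rw [hg]
  congr 1
  funext j
  rw [A.map_smul, hAv j, smul_smul, div_mul_cancel₀ _ (hσpos j).ne']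
end

section
/- If A : X → Y is a compact injective linear operator between Hilbert spaces with singular system {(σ_j, v_j, u_j)}, and f ∈ X satisfies A f = g, then Σ_{j=1}^∞ (⟨g, u_j⟩_Y / σ_j)² < ∞ and f = Σ_j σ_j^{-1} ⟨g, u_j⟩_Y v_j (Picard's theorem, necessity direction). -/
theorem picard_necessity {X Y : Type*}
    [NormedAddCommGroup X] [InnerProductSpace ℝ X] [CompleteSpace X]
    [NormedAddCommGroup Y] [InnerProductSpace ℝ Y] [CompleteSpace Y]
    (A : X →L[ℝ] Y) (hA : IsCompactOperator A) (hinj : Function.Injective A)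
    (σ : ℕ → ℝ) (v : ℕ → X) (u : ℕ → Y)
    (hσpos : ∀ j, 0 < σ j)
    (hv : Orthonormal ℝ v)
    (hvspan : (Submodule.span ℝ (Set.range v)).topologicalClosure = ⊤)
    (hu : Orthonormal ℝ u)
    (hAv : ∀ j, A (v j) = σ j • u j)
    (hAstaru : ∀ j, ContinuousLinearMap.adjoint A (u j) = σ j • v j)
    (f : X) (g : Y) (hfg : A f = g) :
    (Summable fun j => ((inner ℝ g (u j) : ℝ) / σ j) ^ 2) ∧
      f = ∑' j, ((σ j)⁻¹ * (inner ℝ g (u j) : ℝ)) • v j := by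
  -- key identity: ⟨g, u j⟩ / σ j = ⟨v j, f⟩
  have key : ∀ j, (inner ℝ g (u j) : ℝ) / σ j = (inner ℝ (v j) f : ℝ) := by
    intro j
    have h1 : (inner ℝ g (u j) : ℝ) = inner ℝ f (ContinuousLinearMap.adjoint A (u j)) := by
      rw [← hfg, ← ContinuousLinearMap.adjoint_inner_right]
    rw [h1, hAstaru j, real_inner_smul_right, real_inner_comm]
    field_simp [(hσpos j).ne']
  let b : HilbertBasis ℕ ℝ X := HilbertBasis.mk hv (le_of_eq hvspan.symm)
  have hb : ∀ j, b j = v j := fun j => congrFun (HilbertBasis.coe_mk hv _) j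
  have hrepr : ∀ j, b.repr f j = inner ℝ (v j) f := by
    intro j
    rw [b.repr_apply_apply, hb]
  constructor
  · have hs := b.summable_inner_mul_inner f f
    refine hs.congr fun j => ?_
    rw [key j, hb, real_inner_comm f (v j)]
    ring
  · have := b.hasSum_repr f
    have heq : ∀ j, (b.repr f j) • b j = ((σ j)⁻¹ * (inner ℝ g (u j) : ℝ)) • v j := by
      intro j
      rw [hrepr, hb, ← key j]
      ring_nf
    rw [funext heq] at this
    exact this.tsum_eq.symm
end
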